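/- (Convergence rate of the accelerated inexact proximal-gradient method) Let g : ℝ^d → ℝ be convex and differentiable with L-Lipschitz continuous gradient (L > 0), let h : ℝ^d → ℝ be convex and lower semicontinuous, and suppose f = g + h attains its minimum at some x* ∈ ℝ^d. Let α = 1/L. Let {e^(k)}_{k≥1} be a sequence in ℝ^d and {ε^(k)}_{k≥1} a sequence of nonnegative reals. Let x^(0) = y^(0) ∈ ℝ^d, and suppose the sequences {x^(k)}, {y^(k)} satisfy, for every k ≥ 1: (i) h(x^(k)) + (1/(2α))‖x^(k) − v^(k)‖² ≤ inf_{z ∈ ℝ^d} ( h(z) + (1/(2α))‖z − v^(k)‖² ) + ε^(k), where v^(k) = y^(k−1) − α·(∇g(y^(k−1)) + e^(k)); and (ii) y^(k) = x^(k) + ((k−1)/(k+2))·(x^(k) − x^(k−1)). Then for all n ≥ 1, f(x^(n)) − f(x*) ≤ 2L·(‖x^(0) − x*‖ + 2·Ã_n + √(2·B̃_n))² / (n+1)², where Ã_n = Σ_{k=1}^n k·( ‖e^(k)‖/L + √(2ε^(k)/L) ) and B̃_n = Σ_{k=1}^n k²·ε^(k)/L. -/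

import Mathlib

open Set Filter Real InnerProductSpace
open scoped RealInnerProductSpace Topology

section Aux
variable {E : Type*} [NormedAddCommGroup E] [InnerProductSpace ℝ E] [CompleteSpace E]

lemma line_hasDerivAt {g : E → ℝ} {G : E} (a v : E) (t : ℝ)
    (hg : HasGradientAt g G (a + t • v)) :
    HasDerivAt (fun s : ℝ => g (a + s • v)) ⟪G, v⟫ t := by
  have hc : HasDerivAt (fun s : ℝ => a + s • v) v t := by
    simpa using ((hasDerivAt_id t).smul_const v).const_add a
  have := (hg.hasFDerivAt.comp_hasDerivAt t hc)
  simpa [toDual_apply_apply, Function.comp_def] using this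

lemma convex_grad_ineq {g : E → ℝ} {g' : E → E}
    (hgconv : ConvexOn ℝ Set.univ g) (hgrad : ∀ z, HasGradientAt g (g' z) z)
    (w z : E) : g w + ⟪g' w, z - w⟫ ≤ g z := by
  set φ : ℝ → ℝ := fun s => g (w + s • (z - w)) with hφ
  have hd : HasDerivAt φ ⟪g' w, z - w⟫ 0 := by
    have := line_hasDerivAt (g := g) (G := g' (w + (0:ℝ) • (z - w))) w (z - w) 0
      (hgrad _)
    simpa using this
  have hslope : Tendsto (slope φ 0) (𝓝[≠] 0) (𝓝 ⟪g' w, z - w⟫) :=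
    hasDerivAt_iff_tendsto_slope.mp hd
  have hslope' : Tendsto (slope φ 0) (𝓝[>] 0) (𝓝 ⟪g' w, z - w⟫) :=
    hslope.mono_left (nhdsWithin_mono _ (fun s hs => ne_of_gt hs))
  have hbound : ∀ᶠ s in 𝓝[>] (0:ℝ), slope φ 0 s ≤ g z - g w := by
    filter_upwards [Ioo_mem_nhdsGT (zero_lt_one)] with s hs
    have hs0 : 0 < s := hs.1
    have hs1 : s < 1 := hs.2
    have hconv := hgconv.2 (mem_univ w) (mem_univ z) (by linarith : (0:ℝ) ≤ 1 - s)
      (le_of_lt hs0) (by ring)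
    have hpt : (1 - s) • w + s • z = w + s • (z - w) := by
      simp [smul_sub, sub_smul]; abel
    rw [hpt] at hconv
    have : φ s ≤ (1 - s) * g w + s * g z := by simpa [φ, smul_eq_mul] using hconv
    rw [slope_def_field]
    have : (φ s - φ 0) / s ≤ g z - g w := by
      rw [div_le_iff₀ hs0]
      have hφ0 : φ 0 = g w := by simp [φ]
      rw [hφ0]; nlinarith
    simpa [slope, φ] using this
  have := le_of_tendsto hslope' hbound
  linarith

lemma descent_lemma {g : E → ℝ} {g' : E → E} {L : ℝ} (hL : 0 < L)
    (hgrad : ∀ z, HasGradientAt g (g' z) z)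
    (hLip : ∀ z w, ‖g' z - g' w‖ ≤ L * ‖z - w‖)
    (w z : E) : g z ≤ g w + ⟪g' w, z - w⟫ + L / 2 * ‖z - w‖ ^ 2 := by
  set v := z - w with hv
  set F : ℝ → ℝ := fun t => g w + t * ⟪g' w, v⟫ + L * t ^ 2 * ‖v‖ ^ 2 / 2
      - g (w + t • v) with hF
  have hder : ∀ t : ℝ, HasDerivAt F
      (⟪g' w, v⟫ + L * t * ‖v‖ ^ 2 - ⟪g' (w + t • v), v⟫) t := by
    intro t
    have h1 : HasDerivAt (fun s : ℝ => g (w + s • v)) ⟪g' (w + t • v), v⟫ t :=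
      line_hasDerivAt w v t (hgrad _)
    have h2 : HasDerivAt (fun s : ℝ => g w + s * ⟪g' w, v⟫ + L * s ^ 2 * ‖v‖ ^ 2 / 2)
        (⟪g' w, v⟫ + L * t * ‖v‖ ^ 2) t := by
      have : HasDerivAt (fun s : ℝ => g w + s * ⟪g' w, v⟫ + L * s ^ 2 * ‖v‖ ^ 2 / 2)
          (0 + 1 * ⟪g' w, v⟫ + L * (2 * t ^ 1) * ‖v‖ ^ 2 / 2) t := by
        exact (((hasDerivAt_const t (g w)).add
          ((hasDerivAt_id t).mul_const _)).add
          ((((hasDerivAt_pow 2 t).const_mul L).mul_const (‖v‖ ^ 2)).div_const 2))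
      convert this using 1
      ring
    exact h2.sub h1
  have hmono : MonotoneOn F (Icc (0:ℝ) 1) := by
    apply monotoneOn_of_deriv_nonneg (convex_Icc 0 1)
    · have hdiff : Differentiable ℝ F := fun t => (hder t).differentiableAt
      exact hdiff.continuous.continuousOn
    · intro t ht
      exact ((hder t).differentiableAt).differentiableWithinAt
    · intro t ht
      rw [interior_Icc] at ht
      rw [(hder t).deriv]
      have hip : ⟪g' (w + t • v) - g' w, v⟫ ≤ L * t * ‖v‖ ^ 2 := by
        calc ⟪g' (w + t • v) - g' w, v⟫ ≤ ‖g' (w + t • v) - g' w‖ * ‖v‖ :=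
              real_inner_le_norm _ _
          _ ≤ (L * ‖(w + t • v) - w‖) * ‖v‖ := by
              have := hLip (w + t • v) w
              exact mul_le_mul_of_nonneg_right this (norm_nonneg _)
          _ = L * t * ‖v‖ ^ 2 := by
              rw [add_sub_cancel_left, norm_smul]
              simp [abs_of_pos ht.1]; ring
      rw [inner_sub_left] at hip
      linarith
  have h01 := hmono (left_mem_Icc.mpr zero_le_one) (right_mem_Icc.mpr zero_le_one) zero_le_one
  simp only [F] at h01
  simp only [zero_smul, add_zero, zero_mul, one_mul, one_pow, mul_one, one_smul] at h01
  have : w + v = z := by simp [hv]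
  rw [this] at h01
  linarith

lemma quad_combo (p q : E) (t : ℝ) :
    ‖p + t • (q - p)‖ ^ 2 = (1 - t) * ‖p‖ ^ 2 + t * ‖q‖ ^ 2 - t * (1 - t) * ‖q - p‖ ^ 2 := by
  have h1 : ‖p + t • (q - p)‖ ^ 2
      = ‖p‖ ^ 2 + 2 * (t * ⟪p, q - p⟫) + t ^ 2 * ‖q - p‖ ^ 2 := by
    rw [norm_add_sq_real, real_inner_smul_right, norm_smul]
    simp [mul_pow, sq_abs]
  have h2 : ‖q - p‖ ^ 2 = ‖q‖ ^ 2 - 2 * ⟪q, p⟫ + ‖p‖ ^ 2 := norm_sub_sq_real q p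
  have h3 : ⟪p, q - p⟫ = ⟪q, p⟫ - ‖p‖ ^ 2 := by
    rw [inner_sub_right, real_inner_comm p q, real_inner_self_eq_norm_sq]
  linear_combination h1 + 2 * t * h3 + t * h2

lemma prox_strong {h : E → ℝ} {L ε : ℝ} (hL : 0 < L) (hε : 0 ≤ ε)
    (hh : ConvexOn ℝ Set.univ h) (x v : E)
    (hx : ∀ z, h x + L / 2 * ‖x - v‖ ^ 2 ≤ h z + L / 2 * ‖z - v‖ ^ 2 + ε)
    (z : E) :
    h x + L / 2 * ‖x - v‖ ^ 2 + L / 2 * ‖z - x‖ ^ 2 ≤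
      h z + L / 2 * ‖z - v‖ ^ 2 + ε + Real.sqrt (2 * L * ε) * ‖z - x‖ := by
  set R := ‖z - x‖ with hR
  have hR0 : 0 ≤ R := norm_nonneg _
  -- the family of inequalities indexed by t ∈ (0,1]
  have key : ∀ t : ℝ, 0 < t → t ≤ 1 →
      h x + L / 2 * ‖x - v‖ ^ 2 + (1 - t) * (L / 2) * R ^ 2 ≤
        h z + L / 2 * ‖z - v‖ ^ 2 + ε / t := by
    intro t ht0 ht1
    have hw := hx (x + t • (z - x))
    have hconv := hh.2 (mem_univ x) (mem_univ z) (by linarith : (0:ℝ) ≤ 1 - t)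
      (le_of_lt ht0) (by ring)
    have hpt : (1 - t) • x + t • z = x + t • (z - x) := by
      simp [smul_sub, sub_smul]; abel
    rw [hpt, smul_eq_mul, smul_eq_mul] at hconv
    have hq : ‖x + t • (z - x) - v‖ ^ 2
        = (1 - t) * ‖x - v‖ ^ 2 + t * ‖z - v‖ ^ 2 - t * (1 - t) * ‖z - x‖ ^ 2 := by
      have h1 : x + t • (z - x) - v = (x - v) + t • ((z - v) - (x - v)) := by
        rw [sub_sub_sub_cancel_right]; abel
      rw [h1, quad_combo]
      rw [show (z - v) - (x - v) = z - x by abel]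
    have hcomb : h x + L / 2 * ‖x - v‖ ^ 2 ≤
        (1 - t) * (h x + L / 2 * ‖x - v‖ ^ 2) + t * (h z + L / 2 * ‖z - v‖ ^ 2)
          - L / 2 * (t * (1 - t)) * R ^ 2 + ε := by
      calc h x + L / 2 * ‖x - v‖ ^ 2
          ≤ h (x + t • (z - x)) + L / 2 * ‖x + t • (z - x) - v‖ ^ 2 + ε := hw
        _ ≤ ((1 - t) * h x + t * h z) + L / 2 * ‖x + t • (z - x) - v‖ ^ 2 + ε := by
            linarith [hconv]
        _ = (1 - t) * (h x + L / 2 * ‖x - v‖ ^ 2) + t * (h z + L / 2 * ‖z - v‖ ^ 2)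
            - L / 2 * (t * (1 - t)) * R ^ 2 + ε := by rw [hq, hR]; ring
    rw [← sub_le_iff_le_add', le_div_iff₀ ht0]
    nlinarith [hcomb]
  -- now choose t
  rcases eq_or_lt_of_le hR0 with hR0' | hRpos
  · -- R = 0
    have := hx z
    have hsq : 0 ≤ Real.sqrt (2 * L * ε) * R := by positivity
    simp only [← hR0'] at *
    nlinarith [this]
  · rcases eq_or_lt_of_le hε with hε0 | hεpos
    · -- ε = 0
      subst hε0
      simp only [mul_zero, add_zero, Real.sqrt_zero, zero_mul]
      apply le_of_forall_pos_le_add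
      intro η hη
      have hden : 0 < L / 2 * R ^ 2 := by positivity
      set t := min 1 (η / (L / 2 * R ^ 2)) with htdef
      have ht0 : 0 < t := lt_min one_pos (div_pos hη hden)
      have ht1 : t ≤ 1 := min_le_left _ _
      have hk := key t ht0 ht1
      have hts : t * (L / 2 * R ^ 2) ≤ η := by
        calc t * (L / 2 * R ^ 2) ≤ (η / (L / 2 * R ^ 2)) * (L / 2 * R ^ 2) := by
              exact mul_le_mul_of_nonneg_right (min_le_right _ _) (le_of_lt hden)
          _ = η := div_mul_cancel₀ _ (ne_of_gt hden)
      simp only [zero_div] at hk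
      nlinarith [hk]
    · -- ε > 0
      set σ := Real.sqrt (2 * L * ε) with hσ
      have hσpos : 0 < σ := Real.sqrt_pos.mpr (by positivity)
      have hσsq : σ ^ 2 = 2 * L * ε := Real.sq_sqrt (by positivity)
      by_cases hcase : σ ≤ L * R
      · -- t0 = σ / (L * R) ≤ 1
        have ht0pos : 0 < σ / (L * R) := div_pos hσpos (by positivity)
        have ht01 : σ / (L * R) ≤ 1 := (div_le_one (by positivity)).mpr hcase
        have hk := key _ ht0pos ht01
        have hLR : L * R ≠ 0 := by positivity
        have hdiv : ε / (σ / (L * R)) = σ * R / 2 := by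
          rw [div_div_eq_mul_div, div_eq_div_iff hσpos.ne' two_ne_zero]
          linear_combination (-R) * hσsq
        have hmul : (σ / (L * R)) * (L / 2) * R ^ 2 = σ * R / 2 := by
          field_simp
        rw [hdiv] at hk
        nlinarith [hk]
      · -- σ > L * R, use t = 1
        push_neg at hcase
        have hk := key 1 one_pos le_rfl
        have hR2 : L / 2 * R ^ 2 ≤ σ * R := by nlinarith
        simp only [div_one] at hk
        nlinarith [hk]

end Aux

set_option maxHeartbeats 4000000 in
/-- Convergence rate of the accelerated inexact proximal-gradient method
(Schmidt–Roux–Bach, Proposition 2). -/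
theorem inexact_accelerated_proximal_gradient {d : ℕ}
    (g h : EuclideanSpace ℝ (Fin d) → ℝ)
    (g' : EuclideanSpace ℝ (Fin d) → EuclideanSpace ℝ (Fin d))
    (hgconv : ConvexOn ℝ Set.univ g)
    (hgrad : ∀ z, HasGradientAt g (g' z) z)
    (L : ℝ) (hL : 0 < L)
    (hLip : ∀ z w, ‖g' z - g' w‖ ≤ L * ‖z - w‖)
    (hhconv : ConvexOn ℝ Set.univ h) (hhlsc : LowerSemicontinuous h)
    (xstar : EuclideanSpace ℝ (Fin d))
    (hmin : ∀ z, g xstar + h xstar ≤ g z + h z)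
    (α : ℝ) (hα : α = 1 / L)
    (e : ℕ → EuclideanSpace ℝ (Fin d)) (ε : ℕ → ℝ) (hε : ∀ k, 1 ≤ k → 0 ≤ ε k)
    (x y : ℕ → EuclideanSpace ℝ (Fin d)) (hxy0 : x 0 = y 0)
    (hprox : ∀ k, 1 ≤ k → ∀ z,
      h (x k) + (1 / (2 * α)) *
          ‖x k - (y (k - 1) - α • (g' (y (k - 1)) + e k))‖ ^ 2 ≤
        h z + (1 / (2 * α)) *
          ‖z - (y (k - 1) - α • (g' (y (k - 1)) + e k))‖ ^ 2 + ε k)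
    (hacc : ∀ k, 1 ≤ k →
      y k = x k + (((k : ℝ) - 1) / ((k : ℝ) + 2)) • (x k - x (k - 1))) :
    ∀ n, 1 ≤ n →
      g (x n) + h (x n) - (g xstar + h xstar) ≤
        2 * L * (‖x 0 - xstar‖
            + 2 * (∑ k ∈ Finset.Icc 1 n, (k : ℝ) *
                (‖e k‖ / L + Real.sqrt (2 * ε k / L)))
            + Real.sqrt (2 * (∑ k ∈ Finset.Icc 1 n, (k : ℝ) ^ 2 * ε k / L))) ^ 2
          / ((n : ℝ) + 1) ^ 2 := by
  subst hα
  intro n hn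
  set u : ℕ → EuclideanSpace ℝ (Fin d) := fun j => x j + (((j : ℝ) - 1) / 2) • (x j - x (j - 1)) with hu
  set r : ℕ → ℝ := fun j => ‖xstar - u j‖ with hr
  set δ : ℕ → ℝ := fun j => g (x j) + h (x j) - (g xstar + h xstar) with hδ
  have hδ0 : ∀ j, 0 ≤ δ j := fun j => sub_nonneg.mpr (hmin (x j))
  have hr0 : ∀ j, 0 ≤ r j := fun j => norm_nonneg _
  -- master inequality
  have master : ∀ k, 1 ≤ k → ∀ z,
      g (x k) + h (x k) ≤ g z + h z
        + L / 2 * ‖z - y (k - 1)‖ ^ 2 - L / 2 * ‖z - x k‖ ^ 2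
        + (‖e k‖ + Real.sqrt (2 * L * ε k)) * ‖z - x k‖ + ε k := by
    intro k hk z
    set Y := y (k - 1) with hY
    set G := g' Y + e k with hG
    set v := Y - (1/L) • G with hv
    have hα2 : 1 / (2 * (1/L)) = L / 2 := by field_simp
    have hp : ∀ w, h (x k) + L / 2 * ‖x k - v‖ ^ 2 ≤ h w + L / 2 * ‖w - v‖ ^ 2 + ε k := by
      intro w
      have := hprox k hk w
      rw [hα2] at this
      exact this
    have h3 := prox_strong hL (hε k hk) hhconv (x k) v hp z
    have expand : ∀ w, L / 2 * ‖w - v‖ ^ 2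
        = L / 2 * ‖w - Y‖ ^ 2 + ⟪G, w - Y⟫ + 1 / (2 * L) * ‖G‖ ^ 2 := by
      intro w
      have hw : w - v = (w - Y) + (1/L) • G := by rw [hv]; abel
      rw [hw, norm_add_sq_real, real_inner_smul_right, norm_smul, real_inner_comm]
      rw [Real.norm_eq_abs, abs_of_pos (by positivity : (0:ℝ) < 1/L)]
      field_simp
    rw [expand (x k), expand z] at h3
    have h1 := descent_lemma hL hgrad hLip Y (x k)
    have h2 := convex_grad_ineq hgconv hgrad Y z
    have hee : ⟪e k, z - x k⟫ ≤ ‖e k‖ * ‖z - x k‖ := real_inner_le_norm _ _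
    have g1 : ⟪G, x k - Y⟫ = ⟪g' Y, x k - Y⟫ + ⟪e k, x k - Y⟫ := by
      rw [hG, inner_add_left]
    have g2 : ⟪G, z - Y⟫ = ⟪g' Y, z - Y⟫ + ⟪e k, z - Y⟫ := by
      rw [hG, inner_add_left]
    have g3 : ⟪e k, z - Y⟫ - ⟪e k, x k - Y⟫ = ⟪e k, z - x k⟫ := by
      rw [← inner_sub_right]
      congr 1
      abel
    nlinarith [h1, h2, h3, hee, norm_nonneg (z - x k), Real.sqrt_nonneg (2 * L * ε k)]
  -- per-iteration inequality
  have pk : ∀ k, 1 ≤ k →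
      δ k ≤ (1 - 2/((k:ℝ)+1)) * δ (k-1)
        + L/2 * (2/((k:ℝ)+1))^2 * r (k-1)^2 - L/2 * (2/((k:ℝ)+1))^2 * r k^2
        + (2/((k:ℝ)+1)) * ((‖e k‖ + Real.sqrt (2*L*ε k)) * r k) + ε k := by
    intro k hk
    set K := (k:ℝ) with hK
    have hK1 : 1 ≤ K := by rw [hK]; exact_mod_cast hk
    set θ : ℝ := 2/(K+1) with hθ
    have hθpos : 0 < θ := by positivity
    have hθ1 : θ ≤ 1 := by
      rw [hθ, div_le_one (by linarith)]; linarith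
    have hm := master k hk (x (k-1) + θ • (xstar - x (k-1)))
    set z : EuclideanSpace ℝ (Fin d) := x (k-1) + θ • (xstar - x (k-1)) with hz
    have hzc : z = (1-θ) • x (k-1) + θ • xstar := by rw [hz]; module
    have hgz : g z ≤ (1-θ) * g (x (k-1)) + θ * g xstar := by
      rw [hzc]
      exact hgconv.2 (mem_univ _) (mem_univ _) (by linarith) (le_of_lt hθpos) (by ring)
    have hhz : h z ≤ (1-θ) * h (x (k-1)) + θ * h xstar := by
      rw [hzc]
      exact hhconv.2 (mem_univ _) (mem_univ _) (by linarith) (le_of_lt hθpos) (by ring)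
    have hKne : K + 1 ≠ 0 := by positivity
    have hI2 : z - x k = θ • (xstar - u k) := by
      rw [hz, hu]
      simp only
      rw [hθ]
      match_scalars <;> field_simp <;> ring
    have hI1 : z - y (k - 1) = θ • (xstar - u (k - 1)) := by
      rcases eq_or_lt_of_le hk with h1 | h2
      · have hk1 : k = 1 := h1.symm
        subst hk1
        have hu0 : u 0 = x 0 := by rw [hu]; simp
        have hθe : θ = 1 := by rw [hθ, hK]; norm_num
        simp only [show (1:ℕ) - 1 = 0 from rfl, hu0]
        rw [hz, ← hxy0, hθe, one_smul]
        abel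
      · have hk2 : 2 ≤ k := h2
        have hacc' := hacc (k-1) (by omega)
        have hc1 : ((k-1 : ℕ) : ℝ) = K - 1 := by
          rw [hK, Nat.cast_sub hk]; norm_num
        have hc2 : (k-1) - 1 = k - 2 := by omega
        have hc3 : ((k-2 : ℕ) : ℝ) = K - 2 := by
          rw [hK, Nat.cast_sub hk2]; norm_num
        rw [hz, hacc', hu]
        simp only [hc2, hc1]
        rw [hθ]
        have hKm : K - 1 + 2 = K + 1 := by ring
        rw [hKm]
        match_scalars <;> field_simp <;> ring
    rw [hI1, hI2] at hm
    have hn1 : ‖θ • (xstar - u (k-1))‖ ^ 2 = θ^2 * r (k-1)^2 := by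
      rw [norm_smul, Real.norm_eq_abs, abs_of_pos hθpos, mul_pow, hr]
    have hn2 : ‖θ • (xstar - u k)‖ ^ 2 = θ^2 * r k^2 := by
      rw [norm_smul, Real.norm_eq_abs, abs_of_pos hθpos, mul_pow, hr]
    have hn3 : ‖θ • (xstar - u k)‖ = θ * r k := by
      rw [norm_smul, Real.norm_eq_abs, abs_of_pos hθpos, hr]
    rw [hn1, hn2, hn3] at hm
    simp only [hδ]
    nlinarith [hm, hgz, hhz]
  -- polynomial form
  have qk : ∀ k : ℕ, 1 ≤ k →
      ((k:ℝ)+1)^2 * δ k + 2*L*r k^2 ≤ ((k:ℝ)+1)*((k:ℝ)-1) * δ (k-1) + 2*L*r (k-1)^2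
        + 2*((k:ℝ)+1)*((‖e k‖ + Real.sqrt (2*L*ε k)) * r k) + ((k:ℝ)+1)^2 * ε k := by
    intro k hk
    have hss := pk k hk
    set K := (k:ℝ) with hK
    have hK1 : 1 ≤ K := by rw [hK]; exact_mod_cast hk
    have hKpos : (0:ℝ) < (K+1)^2 := by positivity
    have h4 := mul_le_mul_of_nonneg_left hss (le_of_lt hKpos)
    have hexp : (K+1)^2 * ((1 - 2/(K+1)) * δ (k-1)
        + L/2 * (2/(K+1))^2 * r (k-1)^2 - L/2 * (2/(K+1))^2 * r k^2
        + (2/(K+1)) * ((‖e k‖ + Real.sqrt (2*L*ε k)) * r k) + ε k)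
        = (K+1)*(K-1) * δ (k-1) + 2*L*r (k-1)^2 - 2*L*r k^2
          + 2*(K+1)*((‖e k‖ + Real.sqrt (2*L*ε k)) * r k) + (K+1)^2 * ε k := by
      have hne : K + 1 ≠ 0 := by positivity
      field_simp
      ring
    rw [hexp] at h4
    nlinarith [h4]
  -- summation by induction
  have sumineq : ∀ m : ℕ, 1 ≤ m →
      ((m:ℝ)+1)^2 * δ m + 2*L*r m^2 ≤ 2*L*r 0^2
        + ∑ k ∈ Finset.Icc 1 m, (2*((k:ℝ)+1)*((‖e k‖ + Real.sqrt (2*L*ε k)) * r k)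
            + ((k:ℝ)+1)^2 * ε k) := by
    intro m hm
    induction m with
    | zero => omega
    | succ p ih =>
      rcases Nat.lt_or_ge p 1 with hp | hp
      · have hp0 : p = 0 := by omega
        subst hp0
        have hq := qk 1 le_rfl
        rw [Finset.Icc_self, Finset.sum_singleton]
        norm_num at hq ⊢
        nlinarith [hq]
      · have ih' := ih hp
        have hq := qk (p+1) (by omega)
        have hcast : ((p+1 : ℕ) : ℝ) = (p:ℝ) + 1 := by push_cast; ring
        rw [hcast] at hq
        simp only [Nat.add_sub_cancel] at hq
        rw [Finset.sum_Icc_succ_top (by omega : 1 ≤ p + 1)]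
        rw [hcast]
        have hmid : ((p:ℝ)+1+1)*((p:ℝ)+1-1) * δ p ≤ ((p:ℝ)+1)^2 * δ p := by
          nlinarith [hδ0 p]
        push_cast at ih' ⊢
        nlinarith [hq, ih', hmid]
  -- abbreviations
  set c : ℕ → ℝ := fun k => ((k:ℝ)+1)/L * (‖e k‖ + Real.sqrt (2*L*ε k)) with hcdef
  set b : ℕ → ℝ := fun k => ((k:ℝ)+1)^2 * ε k / (2*L) with hbdef
  have hc0 : ∀ k, 1 ≤ k → 0 ≤ c k := by
    intro k hk
    rw [hcdef]
    have h1 : (0:ℝ) ≤ ‖e k‖ + Real.sqrt (2*L*ε k) := by positivity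
    positivity
  have hb0 : ∀ k, 1 ≤ k → 0 ≤ b k := by
    intro k hk
    rw [hbdef]
    have := hε k hk
    positivity
  set A := ∑ k ∈ Finset.Icc 1 n, c k with hAdef
  set B := ∑ k ∈ Finset.Icc 1 n, b k with hBdef
  set S := r 0^2 + B with hSdef
  have hA0 : 0 ≤ A := Finset.sum_nonneg fun k hk => hc0 k (Finset.mem_Icc.mp hk).1
  have hB0 : 0 ≤ B := Finset.sum_nonneg fun k hk => hb0 k (Finset.mem_Icc.mp hk).1
  have hS0 : 0 ≤ S := by rw [hSdef]; positivity
  -- divided partial sums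
  have hpart : ∀ m, 1 ≤ m → m ≤ n →
      r m^2 ≤ S + ∑ k ∈ Finset.Icc 1 m, c k * r k := by
    intro m hm1 hmn
    have hsum := sumineq m hm1
    have heq : ∀ k ∈ Finset.Icc 1 m,
        2*((k:ℝ)+1)*((‖e k‖ + Real.sqrt (2*L*ε k)) * r k) + ((k:ℝ)+1)^2 * ε k
          = 2*L*(c k * r k + b k) := by
      intro k hk
      rw [hcdef, hbdef]
      field_simp
    rw [Finset.sum_congr rfl heq, ← Finset.mul_sum] at hsum
    have hδterm : 0 ≤ ((m:ℝ)+1)^2 * δ m := mul_nonneg (by positivity) (hδ0 m)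
    have h2 : 2*L*r m^2 ≤ 2*L*(r 0^2 + ∑ k ∈ Finset.Icc 1 m, (c k * r k + b k)) := by
      rw [mul_add]
      linarith
    have h3 : r m^2 ≤ r 0^2 + ∑ k ∈ Finset.Icc 1 m, (c k * r k + b k) :=
      le_of_mul_le_mul_left (by linarith [h2]) (by positivity : (0:ℝ) < 2*L)
    rw [Finset.sum_add_distrib] at h3
    have h4 : ∑ k ∈ Finset.Icc 1 m, b k ≤ B := by
      rw [hBdef]
      apply Finset.sum_le_sum_of_subset_of_nonneg (Finset.Icc_subset_Icc_right hmn)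
      intro k hk _
      exact hb0 k (Finset.mem_Icc.mp hk).1
    rw [hSdef]
    linarith
  -- uniform bound on r via max argument
  have hrbound : ∀ m, m ≤ n → r m ≤ A + Real.sqrt S := by
    have hmax := Finset.exists_max_image (Finset.range (n+1)) r
      ⟨0, Finset.mem_range.mpr (by omega)⟩
    obtain ⟨j, hjmem, hjmax⟩ := hmax
    have hjn : j ≤ n := by
      have := Finset.mem_range.mp hjmem
      omega
    have hρ : r j ≤ A + Real.sqrt S := by
      have hρ2 : r j^2 ≤ S + A * r j := by
        rcases Nat.eq_zero_or_pos j with hj0 | hj1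
        · subst hj0
          have h5 : r 0^2 ≤ S := by rw [hSdef]; linarith
          nlinarith [mul_nonneg hA0 (hr0 0)]
        · have hp := hpart j hj1 hjn
          have hcs : ∑ k ∈ Finset.Icc 1 j, c k * r k ≤ A * r j := by
            calc ∑ k ∈ Finset.Icc 1 j, c k * r k
                ≤ ∑ k ∈ Finset.Icc 1 j, c k * r j := by
                  apply Finset.sum_le_sum
                  intro k hk
                  have hk1 := (Finset.mem_Icc.mp hk).1
                  have hkn := (Finset.mem_Icc.mp hk).2
                  have hrkj : r k ≤ r j := hjmax k (Finset.mem_range.mpr (by omega))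
                  exact mul_le_mul_of_nonneg_left hrkj (hc0 k hk1)
              _ = (∑ k ∈ Finset.Icc 1 j, c k) * r j := by rw [Finset.sum_mul]
              _ ≤ A * r j := by
                  apply mul_le_mul_of_nonneg_right _ (hr0 j)
                  rw [hAdef]
                  apply Finset.sum_le_sum_of_subset_of_nonneg (Finset.Icc_subset_Icc_right hjn)
                  intro k hk _
                  exact hc0 k (Finset.mem_Icc.mp hk).1
          linarith
      by_contra hcon
      push_neg at hcon
      have hsqS := Real.sq_sqrt hS0
      have hsn := Real.sqrt_nonneg S
      have hρpos : 0 < r j := lt_of_le_of_lt (add_nonneg hA0 (Real.sqrt_nonneg S)) hcon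
      nlinarith [mul_lt_mul_of_pos_right hcon hρpos,
        mul_le_mul_of_nonneg_left (le_of_lt (lt_of_le_of_lt (by linarith) hcon)) hsn]
    intro m hmn
    exact le_trans (hjmax m (Finset.mem_range.mpr (by omega))) hρ
  -- final assembly
  have heqglob : ∀ k : ℕ,
      2*((k:ℝ)+1)*((‖e k‖ + Real.sqrt (2*L*ε k)) * r k) + ((k:ℝ)+1)^2 * ε k
        = 2*L*(c k * r k + b k) := by
    intro k
    rw [hcdef, hbdef]
    field_simp
  have hsn2 := sumineq n hn
  rw [Finset.sum_congr rfl (fun k _ => heqglob k), ← Finset.mul_sum] at hsn2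
  have hsum2 : ∑ k ∈ Finset.Icc 1 n, (c k * r k + b k) ≤ A * (A + Real.sqrt S) + B := by
    rw [Finset.sum_add_distrib]
    have h1 : ∑ k ∈ Finset.Icc 1 n, c k * r k ≤ A * (A + Real.sqrt S) := by
      calc ∑ k ∈ Finset.Icc 1 n, c k * r k
          ≤ ∑ k ∈ Finset.Icc 1 n, c k * (A + Real.sqrt S) := by
            apply Finset.sum_le_sum
            intro k hk
            exact mul_le_mul_of_nonneg_left
              (hrbound k (Finset.mem_Icc.mp hk).2) (hc0 k (Finset.mem_Icc.mp hk).1)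
        _ = A * (A + Real.sqrt S) := by rw [← Finset.sum_mul, hAdef]
    rw [hBdef]
    linarith
  have hsqS := Real.sq_sqrt hS0
  have hsnn := Real.sqrt_nonneg S
  have hfin1 : ((n:ℝ)+1)^2 * δ n ≤ 2*L*(A + Real.sqrt S)^2 := by
    have hrn2 : (0:ℝ) ≤ 2*L*r n^2 := by positivity
    have hSr : r 0^2 + B = S := hSdef.symm
    nlinarith [hsn2, hsum2, mul_nonneg hA0 hsnn]
  -- bound A + √S by the target base
  have hsq : ∀ k : ℕ, 1 ≤ k → Real.sqrt (2*L*ε k)/L = Real.sqrt (2*ε k/L) := by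
    intro k hk
    rw [show 2*ε k/L = (2*L*ε k)/L^2 by field_simp]
    rw [Real.sqrt_div (by nlinarith [hε k hk, hL] : (0:ℝ) ≤ 2*L*ε k), Real.sqrt_sq hL.le]
  have hA2 : A ≤ 2 * ∑ k ∈ Finset.Icc 1 n, (k:ℝ) * (‖e k‖/L + Real.sqrt (2*ε k/L)) := by
    rw [hAdef, Finset.mul_sum]
    apply Finset.sum_le_sum
    intro k hk
    have hk1 := (Finset.mem_Icc.mp hk).1
    have hkR : (1:ℝ) ≤ (k:ℝ) := by exact_mod_cast hk1
    have hX0 : 0 ≤ ‖e k‖/L + Real.sqrt (2*ε k/L) := by positivity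
    have hceq : c k = ((k:ℝ)+1) * (‖e k‖/L + Real.sqrt (2*ε k/L)) := by
      rw [hcdef, ← hsq k hk1]
      field_simp
    rw [hceq]
    calc ((k:ℝ)+1) * (‖e k‖/L + Real.sqrt (2*ε k/L))
        ≤ (2*(k:ℝ)) * (‖e k‖/L + Real.sqrt (2*ε k/L)) :=
          mul_le_mul_of_nonneg_right (by linarith) hX0
      _ = 2 * ((k:ℝ) * (‖e k‖/L + Real.sqrt (2*ε k/L))) := by ring
  have hBB : B ≤ 2 * ∑ k ∈ Finset.Icc 1 n, (k:ℝ)^2 * ε k / L := by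
    rw [hBdef, Finset.mul_sum]
    apply Finset.sum_le_sum
    intro k hk
    have hk1 := (Finset.mem_Icc.mp hk).1
    have hkR : (1:ℝ) ≤ (k:ℝ) := by exact_mod_cast hk1
    have hεk := hε k hk1
    rw [hbdef]
    calc ((k:ℝ)+1)^2 * ε k / (2*L) = ((k:ℝ)+1)^2 * (ε k / (2*L)) := by ring
      _ ≤ 4*(k:ℝ)^2 * (ε k / (2*L)) := by
          apply mul_le_mul_of_nonneg_right _ (by positivity)
          nlinarith
      _ = 2 * ((k:ℝ)^2 * ε k / L) := by field_simp; ring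
  have hBt0 : (0:ℝ) ≤ ∑ k ∈ Finset.Icc 1 n, (k:ℝ)^2 * ε k / L := by
    apply Finset.sum_nonneg
    intro k hk
    have := hε k (Finset.mem_Icc.mp hk).1
    positivity
  have hr00 : r 0 = ‖x 0 - xstar‖ := by
    have hu0 : u 0 = x 0 := by rw [hu]; simp
    rw [hr]
    simp only [hu0]
    exact norm_sub_rev _ _
  set Bt := ∑ k ∈ Finset.Icc 1 n, (k:ℝ)^2 * ε k / L with hBt
  have hsqrtS : Real.sqrt S ≤ ‖x 0 - xstar‖ + Real.sqrt (2*Bt) := by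
    have h2B := Real.sq_sqrt (by linarith : (0:ℝ) ≤ 2*Bt)
    have hSle : S ≤ (‖x 0 - xstar‖ + Real.sqrt (2*Bt))^2 := by
      rw [hSdef, ← hr00]
      nlinarith [Real.sqrt_nonneg (2*Bt), hr0 0, hBB,
        mul_nonneg (hr0 0) (Real.sqrt_nonneg (2*Bt))]
    calc Real.sqrt S ≤ Real.sqrt ((‖x 0 - xstar‖ + Real.sqrt (2*Bt))^2) :=
          Real.sqrt_le_sqrt hSle
      _ = ‖x 0 - xstar‖ + Real.sqrt (2*Bt) := Real.sqrt_sq (add_nonneg (norm_nonneg _) (Real.sqrt_nonneg _))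
  -- conclude
  have hδgoal : g (x n) + h (x n) - (g xstar + h xstar) = δ n := by rw [hδ]
  rw [hδgoal]
  have hNpos : (0:ℝ) < ((n:ℝ)+1)^2 := by positivity
  rw [le_div_iff₀ hNpos]
  have hbase : A + Real.sqrt S ≤ ‖x 0 - xstar‖
      + 2 * (∑ k ∈ Finset.Icc 1 n, (k:ℝ) * (‖e k‖/L + Real.sqrt (2*ε k/L)))
      + Real.sqrt (2*Bt) := by
    have h9 := add_le_add hA2 hsqrtS
    linarith [h9]
  have hbase0 : 0 ≤ A + Real.sqrt S := add_nonneg hA0 hsnn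
  calc (g (x n) + h (x n) - (g xstar + h xstar)) * ((n:ℝ)+1)^2
      = ((n:ℝ)+1)^2 * δ n := by rw [hδgoal]; ring
    _ ≤ 2*L*(A + Real.sqrt S)^2 := hfin1
    _ ≤ 2*L*(‖x 0 - xstar‖
          + 2 * (∑ k ∈ Finset.Icc 1 n, (k:ℝ) * (‖e k‖/L + Real.sqrt (2*ε k/L)))
          + Real.sqrt (2*Bt))^2 := by
        apply mul_le_mul_of_nonneg_left _ (by positivity)
        exact pow_le_pow_left₀ hbase0 hbase 2
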